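/- Hennessy-Milner theorem for ▲: for image-finite pointed models (M,s) and (M',s'), they satisfy the same L(▲)-formulas if and only if they are ▲-bisimilar. -/

import Mathlib

structure Model where
  W : Type
  ne : Nonempty W
  R : W → W → Prop
  V : ℕ → W → Prop

/-- Disjoint union of two models. -/
def dsum (M N : Model) : Model where
  W := M.W ⊕ N.W
  ne := ⟨Sum.inl M.ne.some⟩
  R := fun a b =>
    match a, b with
    | .inl x, .inl y => M.R x y
    | .inr x, .inr y => N.R x y
    | _, _ => False
  V := fun n => Sum.elim (M.V n) (N.V n)

/-- Z is a ▲-bisimulation on the model M. -/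
def IsTriBisim (M : Model) (Z : M.W → M.W → Prop) : Prop :=
  (∃ a b, Z a b) ∧
  ∀ s s', Z s s' →
    (∀ n, M.V n s ↔ M.V n s') ∧
    (∀ t, M.R s t → ¬ Z s t → ∃ t', M.R s' t' ∧ Z t t') ∧
    (∀ t', M.R s' t' → ¬ Z s' t' → ∃ t, M.R s t ∧ Z t t')

/-- (M,s) and (N,t) are ▲-bisimilar. -/
def TriBisimilar (M : Model) (s : M.W) (N : Model) (t : N.W) : Prop :=
  ∃ Z, IsTriBisim (dsum M N) Z ∧ Z (.inl s) (.inr t)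

/-- The language L(▲). -/
inductive Formula where
  | atom : ℕ → Formula
  | top : Formula
  | neg : Formula → Formula
  | and : Formula → Formula → Formula
  | tri : Formula → Formula

/-- Satisfaction of L(▲)-formulas. -/
def sat (M : Model) : M.W → Formula → Prop
  | s, .atom n => M.V n s
  | _, .top => True
  | s, .neg φ => ¬ sat M s φ
  | s, .and φ ψ => sat M s φ ∧ sat M s ψ
  | s, .tri φ =>
      (sat M s φ → ∀ t, M.R s t → sat M t φ) ∧
      (¬ sat M s φ → ∀ t, M.R s t → ¬ sat M t φ)

/-- M is image-finite. -/
def ImageFinite (M : Model) : Prop := ∀ s, Set.Finite {t | M.R s t}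

lemma sat_tri_iff (M : Model) (s : M.W) (φ : Formula) :
    sat M s (.tri φ) ↔ ∀ t, M.R s t → (sat M s φ ↔ sat M t φ) := by
  show ((sat M s φ → ∀ t, M.R s t → sat M t φ) ∧
      (¬ sat M s φ → ∀ t, M.R s t → ¬ sat M t φ)) ↔ _
  constructor
  · rintro ⟨h1, h2⟩ u hu
    by_cases h : sat M s φ
    · exact ⟨fun _ => h1 h u hu, fun _ => h⟩
    · exact ⟨fun hs => absurd hs h, fun hh => absurd hh (h2 h u hu)⟩
  · intro h
    exact ⟨fun hs u hu => (h u hu).mp hs, fun hs u hu hc => hs ((h u hu).mpr hc)⟩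

lemma sat_inl (M N : Model) : ∀ (φ : Formula) (x : M.W),
    sat (dsum M N) (.inl x) φ ↔ sat M x φ := by
  intro φ
  induction φ with
  | atom n => intro x; exact Iff.rfl
  | top => intro x; exact Iff.rfl
  | neg φ ih => intro x; exact not_congr (ih x)
  | and φ ψ ih1 ih2 => intro x; exact and_congr (ih1 x) (ih2 x)
  | tri φ ih =>
    intro x
    refine (sat_tri_iff (dsum M N) (Sum.inl x) φ).trans ?_
    rw [sat_tri_iff]
    constructor
    · intro h u hu
      rw [← ih x, ← ih u]
      exact h (.inl u) hu
    · rintro h (u | u) hu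
      · rw [ih x, ih u]; exact h u hu
      · exact absurd hu (by simp [dsum])

lemma sat_inr (M N : Model) : ∀ (φ : Formula) (x : N.W),
    sat (dsum M N) (.inr x) φ ↔ sat N x φ := by
  intro φ
  induction φ with
  | atom n => intro x; exact Iff.rfl
  | top => intro x; exact Iff.rfl
  | neg φ ih => intro x; exact not_congr (ih x)
  | and φ ψ ih1 ih2 => intro x; exact and_congr (ih1 x) (ih2 x)
  | tri φ ih =>
    intro x
    refine (sat_tri_iff (dsum M N) (Sum.inr x) φ).trans ?_
    rw [sat_tri_iff]
    constructor
    · intro h u hu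
      rw [← ih x, ← ih u]
      exact h (.inr u) hu
    · rintro h (u | u) hu
      · exact absurd hu (by simp [dsum])
      · rw [ih x, ih u]; exact h u hu

/-- Bisimilar states satisfy the same formulas. -/
lemma bisim_to_equiv (K : Model) (Z : K.W → K.W → Prop) (hZ : IsTriBisim K Z) :
    ∀ (φ : Formula) (a b : K.W), Z a b → (sat K a φ ↔ sat K b φ) := by
  intro φ
  induction φ with
  | atom n => intro a b hab; exact ((hZ.2 a b hab).1 n)
  | top => intro a b _; exact Iff.rfl
  | neg φ ih => intro a b hab; exact not_congr (ih a b hab)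
  | and φ ψ ih1 ih2 => intro a b hab; exact and_congr (ih1 a b hab) (ih2 a b hab)
  | tri φ ih =>
    intro a b hab
    rw [sat_tri_iff, sat_tri_iff]
    obtain ⟨-, hforth, hback⟩ := hZ.2 a b hab
    constructor
    · intro h u hu
      by_cases hbu : Z b u
      · exact ih b u hbu
      · obtain ⟨v, hv, hvu⟩ := hback u hu hbu
        exact ((ih a b hab).symm.trans (h v hv)).trans (ih v u hvu)
    · intro h u hu
      by_cases hau : Z a u
      · exact ih a u hau
      · obtain ⟨v, hv, huv⟩ := hforth u hu hau
        exact ((ih a b hab).trans (h v hv)).trans (ih u v huv).symm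

/-- If two states are not modally equivalent, there is a formula true at the
first and false at the second. -/
lemma distinguish (K : Model) (a b : K.W)
    (h : ¬ ∀ φ, sat K a φ ↔ sat K b φ) :
    ∃ φ, sat K a φ ∧ ¬ sat K b φ := by
  push_neg at h
  obtain ⟨φ, hφ⟩ := h
  rcases hφ with ⟨ha, hb⟩ | ⟨ha, hb⟩
  · exact ⟨φ, ha, hb⟩
  · exact ⟨.neg φ, ha, fun h' => h' hb⟩

/-- Finite conjunction of distinguishing formulas. -/
lemma conj_distinguish (K : Model) (x : K.W) (F : Finset K.W)
    (h : ∀ y ∈ F, ∃ φ, sat K x φ ∧ ¬ sat K y φ) :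
    ∃ ψ, sat K x ψ ∧ ∀ y ∈ F, ¬ sat K y ψ := by
  classical
  induction F using Finset.induction_on with
  | empty => exact ⟨.top, trivial, by simp⟩
  | insert y F' hy ih =>
    obtain ⟨ψ, hψx, hψ⟩ := ih (fun z hz => h z (Finset.mem_insert_of_mem hz))
    obtain ⟨φ, hφx, hφy⟩ := h y (Finset.mem_insert_self y F')
    refine ⟨.and φ ψ, ⟨hφx, hψx⟩, ?_⟩
    intro z hz
    rcases Finset.mem_insert.mp hz with rfl | hz
    · exact fun hc => hφy hc.1
    · exact fun hc => hψ z hz hc.2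

/-- Forth condition for the modal-equivalence relation on an image-finite model. -/
lemma forth_equiv (K : Model) (hK : ImageFinite K) (a b : K.W)
    (hab : ∀ φ, sat K a φ ↔ sat K b φ)
    (t : K.W) (hat : K.R a t) (hne : ¬ ∀ φ, sat K a φ ↔ sat K t φ) :
    ∃ t', K.R b t' ∧ ∀ φ, sat K t φ ↔ sat K t' φ := by
  classical
  by_contra hcon
  have hcon' : ∀ t', K.R b t' → ¬ ∀ φ, sat K t φ ↔ sat K t' φ :=
    fun t' h hh => hcon ⟨t', h, hh⟩
  have hF : ∀ y ∈ (hK b).toFinset, ∃ φ, sat K t φ ∧ ¬ sat K y φ := by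
    intro y hy
    rw [Set.Finite.mem_toFinset] at hy
    exact distinguish K t y (hcon' y hy)
  obtain ⟨ψ, hψt, hψ⟩ := conj_distinguish K t (hK b).toFinset hF
  have hne' : ¬ ∀ φ, sat K t φ ↔ sat K a φ :=
    fun hh => hne (fun φ => (hh φ).symm)
  obtain ⟨α, hαt, hαa⟩ := distinguish K t a hne'
  set β : Formula := .and α ψ with hβ
  have hβt : sat K t β := ⟨hαt, hψt⟩
  have hβa : ¬ sat K a β := fun hc => hαa hc.1
  have hnotri : ¬ sat K a (.tri β) := by
    rw [sat_tri_iff]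
    intro h
    exact hβa ((h t hat).mpr hβt)
  have hnotrib : ¬ sat K b (.tri β) := fun h => hnotri ((hab (.tri β)).mpr h)
  rw [sat_tri_iff] at hnotrib
  push_neg at hnotrib
  obtain ⟨u, hu, hdis⟩ := hnotrib
  rcases hdis with ⟨h1, h2⟩ | ⟨h1, h2⟩
  · exact hβa ((hab β).mpr h1)
  · exact hψ u (by rwa [Set.Finite.mem_toFinset]) h2.2

lemma dsum_imagefinite (M N : Model) (hM : ImageFinite M) (hN : ImageFinite N) :
    ImageFinite (dsum M N) := by
  rintro (x | x)
  · apply Set.Finite.subset ((hM x).image Sum.inl)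
    rintro (y | y) hy
    · exact ⟨y, hy, rfl⟩
    · exact absurd hy (by simp [dsum])
  · apply Set.Finite.subset ((hN x).image Sum.inr)
    rintro (y | y) hy
    · exact absurd hy (by simp [dsum])
    · exact ⟨y, hy, rfl⟩

theorem stmt15 (M N : Model) (s : M.W) (t : N.W)
    (hM : ImageFinite M) (hN : ImageFinite N) :
    (∀ φ : Formula, sat M s φ ↔ sat N t φ) ↔ TriBisimilar M s N t := by
  set K := dsum M N with hK
  have hKfin : ImageFinite K := dsum_imagefinite M N hM hN
  constructor
  · intro h
    refine ⟨fun a b => ∀ φ, sat K a φ ↔ sat K b φ, ?_, ?_⟩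
    · constructor
      · exact ⟨.inl s, .inr t,
          fun φ => ((sat_inl M N φ s).trans (h φ)).trans (sat_inr M N φ t).symm⟩
      · intro a b hab
        refine ⟨fun n => hab (.atom n), ?_, ?_⟩
        · intro u hu hne
          exact forth_equiv K hKfin a b hab u hu hne
        · intro u hu hne
          obtain ⟨v, hv, hvu⟩ :=
            forth_equiv K hKfin b a (fun φ => (hab φ).symm) u hu hne
          exact ⟨v, hv, fun φ => (hvu φ).symm⟩
    · exact fun φ => ((sat_inl M N φ s).trans (h φ)).trans (sat_inr M N φ t).symm
  · rintro ⟨Z, hZ, hst⟩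
    intro φ
    exact ((sat_inl M N φ s).symm.trans
      (bisim_to_equiv K Z hZ φ (.inl s) (.inr t) hst)).trans (sat_inr M N φ t)
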